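/- The degenerate Stirling numbers of the second kind satisfy the recurrence S_{2,λ}(n+1, k) = k S_{2,λ}(n, k) + S_{2,λ}(n, k−1) − nλ S_{2,λ}(n, k) for 1 ≤ k ≤ n. -/

import Mathlib

open Real Filter Finset

/-- λ-falling factorial (x)_{n,λ} = x(x-λ)⋯(x-(n-1)λ). -/
noncomputable def dfall (lam x : ℝ) (n : ℕ) : ℝ := ∏ j ∈ Finset.range n, (x - j * lam)

/-- degenerate exponential e_λ(t) = (1+λt)^{1/λ}. -/
noncomputable def dexp (lam t : ℝ) : ℝ := (1 + lam * t) ^ (1 / lam)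

/-- Degenerate Stirling numbers of the second kind, via coefficients of (1/k!)(e_λ(t)-1)^k. -/
noncomputable def degStirling (lam : ℝ) (n k : ℕ) : ℝ :=
  (Nat.factorial n : ℝ) / (Nat.factorial k : ℝ) *
    PowerSeries.coeff (R := ℝ) n ((PowerSeries.mk (fun m => dfall lam 1 m / (Nat.factorial m : ℝ)) - 1) ^ k)

open PowerSeries in
lemma dE_key (lam : ℝ) :
    (1 + C lam * X) * (d⁄dX ℝ) (PowerSeries.mk (fun m => dfall lam 1 m / (Nat.factorial m : ℝ)))
      = PowerSeries.mk (fun m => dfall lam 1 m / (Nat.factorial m : ℝ)) := by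
  set E := PowerSeries.mk (fun m => dfall lam 1 m / (Nat.factorial m : ℝ)) with hE
  ext n
  have hc : ∀ m : ℕ, coeff m ((d⁄dX ℝ) E) = dfall lam 1 (m + 1) / (Nat.factorial m : ℝ) := by
    intro m
    rw [coeff_derivative, hE, coeff_mk, Nat.factorial_succ]
    have h1 : (Nat.factorial m : ℝ) ≠ 0 := Nat.cast_ne_zero.mpr (Nat.factorial_ne_zero m)
    push_cast
    field_simp
  have hdf : ∀ m : ℕ, dfall lam 1 (m + 1) = dfall lam 1 m * (1 - m * lam) := by
    intro m; rw [dfall, dfall, Finset.prod_range_succ]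
  rw [add_mul, one_mul, map_add]
  cases n with
  | zero =>
      rw [mul_comm (C lam) X, mul_assoc, coeff_zero_X_mul, add_zero, hc, hE, coeff_mk]
      simp [hdf 0, dfall]
  | succ m =>
      rw [mul_comm (C lam) X, mul_assoc, coeff_succ_X_mul, coeff_C_mul, hc, hc, hE, coeff_mk,
        hdf (m + 1), hdf m, Nat.factorial_succ]
      have h1 : (Nat.factorial m : ℝ) ≠ 0 := Nat.cast_ne_zero.mpr (Nat.factorial_ne_zero m)
      push_cast
      field_simp
      ring

theorem stmt9 (lam : ℝ) (n k : ℕ) (hk : 1 ≤ k) (hkn : k ≤ n) :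
    degStirling lam (n + 1) k
      = k * degStirling lam n k + degStirling lam n (k - 1)
        - n * lam * degStirling lam n k := by
  obtain ⟨j, rfl⟩ : ∃ j, k = j + 1 := ⟨k - 1, (Nat.succ_pred_eq_of_pos hk).symm⟩
  obtain ⟨m, rfl⟩ : ∃ m, n = m + 1 := ⟨n - 1, (Nat.succ_pred_eq_of_pos (hk.trans hkn)).symm⟩
  set E := PowerSeries.mk (fun m => dfall lam 1 m / (Nat.factorial m : ℝ)) with hE
  open PowerSeries in
  have hF : (1 + C lam * X) * (d⁄dX ℝ) ((E - 1) ^ (j + 1))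
      = C ((j : ℝ) + 1) * ((E - 1) ^ (j + 1) + (E - 1) ^ j) := by
    rw [Derivation.leibniz_pow, map_sub, Derivation.map_one_eq_zero, sub_zero,
      Nat.add_sub_cancel]
    simp only [nsmul_eq_mul, smul_eq_mul]
    rw [show (1 + C lam * X) * ((↑(j + 1) : ℝ⟦X⟧) * ((E - 1) ^ j * (d⁄dX ℝ) E))
        = (↑(j + 1) : ℝ⟦X⟧) * ((E - 1) ^ j * ((1 + C lam * X) * (d⁄dX ℝ) E)) from by ring,
      dE_key lam, ← hE]
    have hcast : ((j + 1 : ℕ) : ℝ⟦X⟧) = C ((j : ℝ) + 1) := by push_cast; simp [map_add]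
    rw [hcast]; ring
  open PowerSeries in
  have key := congrArg (coeff (m + 1)) hF
  open PowerSeries in
  rw [add_mul, one_mul, map_add, mul_comm (C lam) X, mul_assoc, coeff_succ_X_mul,
    coeff_C_mul, coeff_derivative, coeff_derivative, coeff_C_mul, map_add] at key
  set A := PowerSeries.coeff (m + 1 + 1) ((E - 1) ^ (j + 1)) with hA
  set B := PowerSeries.coeff (m + 1) ((E - 1) ^ (j + 1)) with hB
  set Cc := PowerSeries.coeff (m + 1) ((E - 1) ^ j) with hCc
  -- key : A * (m+1+1) + lam * (B * (m+1)) = (j+1) * (B + Cc)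
  simp only [degStirling, ← hE, Nat.add_sub_cancel, ← hA, ← hB, ← hCc]
  have h1 : (Nat.factorial (m + 1) : ℝ) ≠ 0 := Nat.cast_ne_zero.mpr (Nat.factorial_ne_zero _)
  have h2 : (Nat.factorial (j + 1) : ℝ) ≠ 0 := Nat.cast_ne_zero.mpr (Nat.factorial_ne_zero _)
  have h3 : (Nat.factorial j : ℝ) ≠ 0 := Nat.cast_ne_zero.mpr (Nat.factorial_ne_zero _)
  rw [Nat.factorial_succ (m + 1), Nat.factorial_succ j]
  push_cast at key ⊢
  field_simp
  linear_combination key
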